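/- arXiv:2307.15150 — 2 statements merged into one kernel-verified Lean document; each statement's English description precedes it below -/
import Mathlib

section
/- With r i.i.d. Bernoulli(γ) on [m]×[n] and M the block-expanded mask with block size 2k+1, the expected number of 1-entries of M over the four k×k corner regions equals 4·(k² - Σ_{1 ≤ i,j ≤ k} (1-γ)^{(k+i)(k+j)}). -/
open MeasureTheory

/-- Product measure on an `m × n` grid of i.i.d. Bernoulli(γ) Boolean entries. -/
noncomputable def gridMeasure (m n : ℕ) (γ : ENNReal) (hγ : γ ≤ 1) :
    Measure ((Fin m × Fin n) → Bool) :=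
  Measure.pi fun _ => (PMF.bernoulli γ.toNNReal
    (by simpa using ENNReal.toNNReal_mono ENNReal.one_ne_top hγ)).toMeasure

/-- `maskOn m n k r i j` says the block-expanded mask `M` has a `1` at the (1-based)
grid position `(i, j)`: some grid entry `r` within Chebyshev distance `k` equals `1`. -/
def maskOn (m n k : ℕ) (r : (Fin m × Fin n) → Bool) (i j : ℕ) : Prop :=
  ∃ i' j' : ℕ, ∃ (h1 : 1 ≤ i') (h2 : i' ≤ m) (h3 : 1 ≤ j') (h4 : j' ≤ n),
    |(i' : ℤ) - (i : ℤ)| ≤ (k : ℤ) ∧ |(j' : ℤ) - (j : ℤ)| ≤ (k : ℤ) ∧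
    r (⟨i' - 1, by omega⟩, ⟨j' - 1, by omega⟩) = true

open scoped Classical

/-! ### Auxiliary definitions and lemmas -/

def rowSet (m k i : ℕ) : Finset (Fin m) :=
  Finset.univ.filter fun a => i ≤ (a : ℕ) + 1 + k ∧ (a : ℕ) + 1 ≤ i + k

def cornerSet (m n k i j : ℕ) : Finset (Fin m × Fin n) :=
  rowSet m k i ×ˢ rowSet n k j

lemma maskOn_iff (m n k : ℕ) (r : (Fin m × Fin n) → Bool) (i j : ℕ) :
    maskOn m n k r i j ↔ ∃ q ∈ cornerSet m n k i j, r q = true := by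
  constructor
  · rintro ⟨i', j', h1, h2, h3, h4, hi, hj, hr⟩
    rw [abs_le] at hi hj
    refine ⟨(⟨i' - 1, by omega⟩, ⟨j' - 1, by omega⟩), ?_, hr⟩
    simp only [cornerSet, rowSet, Finset.mem_product, Finset.mem_filter, Finset.mem_univ,
      true_and]
    omega
  · rintro ⟨⟨a, b⟩, hq, hr⟩
    simp only [cornerSet, rowSet, Finset.mem_product, Finset.mem_filter, Finset.mem_univ,
      true_and] at hq
    refine ⟨(a : ℕ) + 1, (b : ℕ) + 1, by omega, by omega, by omega, by omega, ?_, ?_, ?_⟩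
    · rw [abs_le]; push_cast; omega
    · rw [abs_le]; push_cast; omega
    · simp only [Nat.add_sub_cancel, Fin.eta]; exact hr

lemma allFalse_measurable (m n : ℕ) (S : Finset (Fin m × Fin n)) :
    MeasurableSet {r : (Fin m × Fin n) → Bool | ∀ q ∈ S, r q = false} := by
  have : {r : (Fin m × Fin n) → Bool | ∀ q ∈ S, r q = false}
      = ⋂ q ∈ S, {r | r q = false} := by ext; simp
  rw [this]
  refine MeasurableSet.biInter S.countable_toSet fun q _ => ?_
  have : {r : (Fin m × Fin n) → Bool | r q = false}
      = (fun r : (Fin m × Fin n) → Bool => r q) ⁻¹' {false} := rfl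
  rw [this]
  exact (measurable_pi_apply q) (measurableSet_singleton false)

lemma exists_true_eq_compl (m n : ℕ) (S : Finset (Fin m × Fin n)) :
    {r : (Fin m × Fin n) → Bool | ∃ q ∈ S, r q = true}
      = {r : (Fin m × Fin n) → Bool | ∀ q ∈ S, r q = false}ᶜ := by
  ext r; simp [Set.mem_compl_iff, not_forall]

lemma allFalse_measure (m n : ℕ) (γ : ENNReal) (hγ : γ ≤ 1) (S : Finset (Fin m × Fin n)) :
    gridMeasure m n γ hγ {r | ∀ q ∈ S, r q = false} = (1 - γ) ^ S.card := by
  have hset : {r : (Fin m × Fin n) → Bool | ∀ q ∈ S, r q = false}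
      = Set.pi Set.univ (fun q => if q ∈ S then ({false} : Set Bool) else Set.univ) := by
    ext r
    simp only [Set.mem_setOf_eq, Set.mem_pi, Set.mem_univ, forall_true_left]
    constructor
    · intro h q; split_ifs with hq
      · simp [h q hq]
      · simp
    · intro h q hq; have := h q; simp [hq] at this; exact this
  rw [gridMeasure, hset, Measure.pi_pi]
  have hfalse : ((PMF.bernoulli γ.toNNReal (by simpa using ENNReal.toNNReal_mono ENNReal.one_ne_top hγ)).toMeasure) ({false} : Set Bool) = 1 - γ := by
    rw [PMF.toMeasure_apply_singleton _ _ (measurableSet_singleton _)]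
    simp [PMF.bernoulli, ENNReal.coe_toNNReal (ne_top_of_le_ne_top ENNReal.one_ne_top hγ)]
  have huniv : ((PMF.bernoulli γ.toNNReal (by simpa using ENNReal.toNNReal_mono ENNReal.one_ne_top hγ)).toMeasure) (Set.univ : Set Bool) = 1 := by
    simp [add_tsub_cancel_of_le hγ, PMF.bernoulli, ENNReal.coe_toNNReal (ne_top_of_le_ne_top ENNReal.one_ne_top hγ)]
  calc ∏ q : Fin m × Fin n, ((PMF.bernoulli γ.toNNReal (by simpa using ENNReal.toNNReal_mono ENNReal.one_ne_top hγ)).toMeasure)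
        (if q ∈ S then ({false} : Set Bool) else Set.univ)
      = ∏ q : Fin m × Fin n, (if q ∈ S then (1 - γ) else 1) := by
        apply Finset.prod_congr rfl; intro q _
        split_ifs <;> simp [hfalse, huniv, add_tsub_cancel_of_le hγ, PMF.bernoulli, ENNReal.coe_toNNReal (ne_top_of_le_ne_top ENNReal.one_ne_top hγ)]
    _ = (1 - γ) ^ S.card := by
        rw [Finset.prod_ite_mem, Finset.univ_inter, Finset.prod_const]

instance (m n : ℕ) (γ : ENNReal) (hγ : γ ≤ 1) :
    IsProbabilityMeasure (gridMeasure m n γ hγ) := by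
  unfold gridMeasure; infer_instance

lemma exists_true_measure (m n : ℕ) (γ : ENNReal) (hγ : γ ≤ 1) (S : Finset (Fin m × Fin n)) :
    gridMeasure m n γ hγ {r | ∃ q ∈ S, r q = true} = 1 - (1 - γ) ^ S.card := by
  rw [exists_true_eq_compl, measure_compl (allFalse_measurable m n S) (measure_ne_top _ _),
    allFalse_measure m n γ hγ S, measure_univ]

lemma card_filter_fin (m lo hi : ℕ) (h : hi ≤ m) :
    (Finset.univ.filter fun a : Fin m => lo ≤ (a : ℕ) ∧ (a : ℕ) < hi).card = hi - lo := by
  rw [← Nat.card_Ico lo hi]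
  refine Finset.card_bij' (fun a _ => (a : ℕ))
    (fun x hx => (⟨x, lt_of_lt_of_le (Finset.mem_Ico.mp hx).2 h⟩ : Fin m)) ?_ ?_ ?_ ?_
  · intro a ha; simp [Finset.mem_filter] at ha; simp [Finset.mem_Ico]; omega
  · intro x hx; simp [Finset.mem_Ico] at hx; simp [Finset.mem_filter]; omega
  · intro a ha; rfl
  · intro x hx; rfl

lemma rowSet_card_lo (m k i : ℕ) (h1 : 1 ≤ i) (h2 : i ≤ k) (h3 : 2 * k < m) :
    (rowSet m k i).card = k + i := by
  have he : rowSet m k i = Finset.univ.filter fun a : Fin m => 0 ≤ (a : ℕ) ∧ (a : ℕ) < i + k := by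
    unfold rowSet
    apply Finset.filter_congr; intro a _; constructor <;> intro <;> omega
  rw [he, card_filter_fin m 0 (i + k) (by omega)]; omega

lemma rowSet_card_hi (m k i : ℕ) (h1 : m - k + 1 ≤ i) (h2 : i ≤ m) (h3 : 2 * k < m) :
    (rowSet m k i).card = k + (m + 1 - i) := by
  have he : rowSet m k i
      = Finset.univ.filter fun a : Fin m => i - k - 1 ≤ (a : ℕ) ∧ (a : ℕ) < m := by
    unfold rowSet
    apply Finset.filter_congr; intro a _
    have := a.isLt
    constructor <;> intro <;> omega
  rw [he, card_filter_fin m (i - k - 1) m le_rfl]; omega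

lemma sum_far (m k : ℕ) (hk : k ≤ m) (g : ℕ → ENNReal) :
    ∑ i ∈ Finset.Icc (m - k + 1) m, g i = ∑ i ∈ Finset.Icc 1 k, g (m + 1 - i) := by
  refine Finset.sum_nbij' (fun i => m + 1 - i) (fun i => m + 1 - i) ?_ ?_ ?_ ?_ ?_ <;>
    (intro a ha; simp only [Finset.mem_Icc] at *) <;> first | omega | (congr 1; omega)

/-- Expected number of `1`-entries of the block-expanded mask over the four `k × k`
corner regions equals `4 (k² - Σ_{1 ≤ i,j ≤ k} (1-γ)^{(k+i)(k+j)})`. -/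
theorem corner_expected_count (m n k : ℕ) (hk : 1 ≤ k)
    (hm : 2 * (2 * k + 1) < m) (hn : 2 * (2 * k + 1) < n)
    (γ : ENNReal) (hγ : γ ≤ 1) :
    (∫⁻ r, (∑ p ∈ (Finset.Icc 1 k ∪ Finset.Icc (m - k + 1) m) ×ˢ
          (Finset.Icc 1 k ∪ Finset.Icc (n - k + 1) n),
        if maskOn m n k r p.1 p.2 then (1 : ENNReal) else 0) ∂(gridMeasure m n γ hγ))
      = 4 * ((k ^ 2 : ENNReal) -
          ∑ i ∈ Finset.Icc 1 k, ∑ j ∈ Finset.Icc 1 k, (1 - γ) ^ ((k + i) * (k + j))) := by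
  have hmaskSet : ∀ i j : ℕ, {r : (Fin m × Fin n) → Bool | maskOn m n k r i j}
      = {r | ∃ q ∈ cornerSet m n k i j, r q = true} := by
    intro i j; ext r; exact maskOn_iff m n k r i j
  have hmeasSet : ∀ i j : ℕ,
      MeasurableSet {r : (Fin m × Fin n) → Bool | maskOn m n k r i j} := by
    intro i j
    rw [hmaskSet, exists_true_eq_compl]
    exact (allFalse_measurable m n _).compl
  have hind : ∀ i j : ℕ, (fun r => if maskOn m n k r i j then (1 : ENNReal) else 0)
      = Set.indicator {r | maskOn m n k r i j} (fun _ => 1) := by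
    intro i j; funext r; simp [Set.indicator_apply]
  -- step 1: swap integral and finite sum
  rw [lintegral_finset_sum _ (fun p _ => by
    rw [hind p.1 p.2]
    exact Measurable.indicator measurable_const (hmeasSet p.1 p.2))]
  -- step 2: compute each integral
  have key : ∀ p : ℕ × ℕ,
      (∫⁻ r, (if maskOn m n k r p.1 p.2 then (1 : ENNReal) else 0) ∂(gridMeasure m n γ hγ))
      = 1 - (1 - γ) ^ ((rowSet m k p.1).card * (rowSet n k p.2).card) := by
    rintro ⟨i, j⟩
    simp only
    rw [hind i j]
    rw [show ({r : (Fin m × Fin n) → Bool | maskOn m n k r i j}.indicator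
        (fun _ => (1 : ENNReal))) = {r : (Fin m × Fin n) → Bool | maskOn m n k r i j}.indicator 1
      from rfl]
    rw [lintegral_indicator_one (hmeasSet i j), hmaskSet i j,
      exists_true_measure m n γ hγ _, cornerSet, Finset.card_product]
  simp only [key]
  -- step 3: split the sums
  have hdm : Disjoint (Finset.Icc 1 k) (Finset.Icc (m - k + 1) m) := by
    rw [Finset.disjoint_left]; intro a ha hb
    simp only [Finset.mem_Icc] at ha hb; omega
  have hdn : Disjoint (Finset.Icc 1 k) (Finset.Icc (n - k + 1) n) := by
    rw [Finset.disjoint_left]; intro a ha hb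
    simp only [Finset.mem_Icc] at ha hb; omega
  rw [Finset.sum_product, Finset.sum_union hdm]
  simp only [Finset.sum_union hdn]
  -- step 4: evaluate the four corner sums
  set T0 : ENNReal := ∑ i ∈ Finset.Icc 1 k, ∑ j ∈ Finset.Icc 1 k,
    (1 - (1 - γ) ^ ((k + i) * (k + j))) with hT0
  have hval_lo_m : ∀ i ∈ Finset.Icc 1 k, (rowSet m k i).card = k + i := by
    intro i hi; simp only [Finset.mem_Icc] at hi
    exact rowSet_card_lo m k i hi.1 hi.2 (by omega)
  have hval_lo_n : ∀ j ∈ Finset.Icc 1 k, (rowSet n k j).card = k + j := by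
    intro j hj; simp only [Finset.mem_Icc] at hj
    exact rowSet_card_lo n k j hj.1 hj.2 (by omega)
  have hval_hi_m : ∀ i ∈ Finset.Icc 1 k, (rowSet m k (m + 1 - i)).card = k + i := by
    intro i hi; simp only [Finset.mem_Icc] at hi
    rw [rowSet_card_hi m k (m + 1 - i) (by omega) (by omega) (by omega)]
    omega
  have hval_hi_n : ∀ j ∈ Finset.Icc 1 k, (rowSet n k (n + 1 - j)).card = k + j := by
    intro j hj; simp only [Finset.mem_Icc] at hj
    rw [rowSet_card_hi n k (n + 1 - j) (by omega) (by omega) (by omega)]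
    omega
  have h11 : ∑ i ∈ Finset.Icc 1 k, ∑ j ∈ Finset.Icc 1 k,
      (1 - (1 - γ) ^ ((rowSet m k i).card * (rowSet n k j).card)) = T0 := by
    refine Finset.sum_congr rfl fun i hi => Finset.sum_congr rfl fun j hj => ?_
    rw [hval_lo_m i hi, hval_lo_n j hj]
  have h12 : ∑ i ∈ Finset.Icc 1 k, ∑ j ∈ Finset.Icc (n - k + 1) n,
      (1 - (1 - γ) ^ ((rowSet m k i).card * (rowSet n k j).card)) = T0 := by
    refine Finset.sum_congr rfl fun i hi => ?_
    rw [sum_far n k (by omega)]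
    refine Finset.sum_congr rfl fun j hj => ?_
    rw [hval_lo_m i hi, hval_hi_n j hj]
  have h21 : ∑ i ∈ Finset.Icc (m - k + 1) m, ∑ j ∈ Finset.Icc 1 k,
      (1 - (1 - γ) ^ ((rowSet m k i).card * (rowSet n k j).card)) = T0 := by
    rw [sum_far m k (by omega)]
    refine Finset.sum_congr rfl fun i hi => Finset.sum_congr rfl fun j hj => ?_
    rw [hval_hi_m i hi, hval_lo_n j hj]
  have h22 : ∑ i ∈ Finset.Icc (m - k + 1) m, ∑ j ∈ Finset.Icc (n - k + 1) n,
      (1 - (1 - γ) ^ ((rowSet m k i).card * (rowSet n k j).card)) = T0 := by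
    rw [sum_far m k (by omega)]
    refine Finset.sum_congr rfl fun i hi => ?_
    rw [sum_far n k (by omega)]
    refine Finset.sum_congr rfl fun j hj => ?_
    rw [hval_hi_m i hi, hval_hi_n j hj]
  simp only [Finset.sum_add_distrib]
  rw [h11, h12, h21, h22]
  -- step 5: final arithmetic
  have hx : ∀ i j : ℕ, (1 - γ) ^ ((k + i) * (k + j)) ≤ (1 : ENNReal) :=
    fun i j => pow_le_one' tsub_le_self _
  have hsum : T0 + (∑ i ∈ Finset.Icc 1 k, ∑ j ∈ Finset.Icc 1 k,
      (1 - γ) ^ ((k + i) * (k + j))) = (k ^ 2 : ENNReal) := by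
    rw [hT0, ← Finset.sum_add_distrib]
    have : ∀ i ∈ Finset.Icc 1 k,
        (∑ j ∈ Finset.Icc 1 k, (1 - (1 - γ) ^ ((k + i) * (k + j))))
          + (∑ j ∈ Finset.Icc 1 k, (1 - γ) ^ ((k + i) * (k + j)))
        = (k : ENNReal) := by
      intro i _
      rw [← Finset.sum_add_distrib]
      have : ∀ j ∈ Finset.Icc 1 k,
          (1 - (1 - γ) ^ ((k + i) * (k + j))) + (1 - γ) ^ ((k + i) * (k + j)) = 1 :=
        fun j _ => tsub_add_cancel_of_le (hx i j)
      rw [Finset.sum_congr rfl this, Finset.sum_const, Nat.card_Icc]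
      simp
    rw [Finset.sum_congr rfl this, Finset.sum_const, Nat.card_Icc]
    simp [pow_two]
  have hfin : (∑ i ∈ Finset.Icc 1 k, ∑ j ∈ Finset.Icc 1 k,
      (1 - γ) ^ ((k + i) * (k + j))) ≠ ⊤ := by
    refine ne_of_lt (ENNReal.sum_lt_top.mpr fun i _ => ENNReal.sum_lt_top.mpr fun j _ =>
      lt_of_le_of_lt (hx i j) ENNReal.one_lt_top)
  rw [← ENNReal.eq_sub_of_add_eq hfin hsum]
  ring
end

section
/- For fixed integers k ≥ 1 and m,n > 2(2k+1), let p₁(γ) = 1 - (1-γ)^{(2k+1)²}, p₂(γ) = (m-2k)(n-2k)(1-(1-γ)^{(2k+1)²})/(mn), and let p(γ) be the full boundary-corrected expression: p(γ) = (1-2k/m)(1-2k/n)(1-(1-γ)^{(2k+1)²}) + (4/(mn))(k² - Σ_{1≤i,j≤k}(1-γ)^{(k+i)(k+j)}) + 2(1/m+1/n-4k/(mn))·Σ_{j=1}^{k}(1-(1-γ)^{(2k+1)(k+j)}). Then for all γ ∈ [0,1], p₂(γ) ≤ p(γ) ≤ p₁(γ). -/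
/-- The exact boundary-corrected drop fraction `p(γ)` is sandwiched between the
restricted-center drop probability `p₂(γ)` and the no-boundary approximation `p₁(γ)`. -/
theorem p_sandwich (m n k : ℕ) (hk : 1 ≤ k)
    (hm : 2 * (2 * k + 1) < m) (hn : 2 * (2 * k + 1) < n)
    (p₁ p₂ p : ℝ → ℝ)
    (hp₁ : ∀ γ : ℝ, p₁ γ = 1 - (1 - γ) ^ ((2 * k + 1) ^ 2))
    (hp₂ : ∀ γ : ℝ, p₂ γ = ((m - 2 * k : ℕ) : ℝ) * ((n - 2 * k : ℕ) : ℝ) *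
        (1 - (1 - γ) ^ ((2 * k + 1) ^ 2)) / ((m : ℝ) * n))
    (hp : ∀ γ : ℝ, p γ =
        (1 - 2 * k / (m : ℝ)) * (1 - 2 * k / (n : ℝ)) * (1 - (1 - γ) ^ ((2 * k + 1) ^ 2))
        + 4 / ((m : ℝ) * n) * ((k ^ 2 : ℝ) -
            ∑ i ∈ Finset.Icc 1 k, ∑ j ∈ Finset.Icc 1 k, (1 - γ) ^ ((k + i) * (k + j)))
        + 2 * (1 / (m : ℝ) + 1 / (n : ℝ) - 4 * k / ((m : ℝ) * n)) *
            ∑ j ∈ Finset.Icc 1 k, (1 - (1 - γ) ^ ((2 * k + 1) * (k + j)))) :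
    ∀ γ ∈ Set.Icc (0 : ℝ) 1, p₂ γ ≤ p γ ∧ p γ ≤ p₁ γ := by
  intro γ hγ
  obtain ⟨hγ0, hγ1⟩ := hγ
  set x : ℝ := 1 - γ with hxdef
  have hx0 : (0:ℝ) ≤ x := by simp only [hxdef]; linarith
  have hx1 : x ≤ 1 := by simp only [hxdef]; linarith
  have hkR : (1:ℝ) ≤ k := by exact_mod_cast hk
  have hm' : 4 * k + 2 < m := by omega
  have hn' : 4 * k + 2 < n := by omega
  have hmR : 4 * (k:ℝ) + 2 < m := by exact_mod_cast hm'
  have hnR : 4 * (k:ℝ) + 2 < n := by exact_mod_cast hn'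
  have hm0 : (0:ℝ) < m := by linarith
  have hn0 : (0:ℝ) < n := by linarith
  set X : ℝ := x ^ ((2 * k + 1) ^ 2) with hXdef
  set S1 : ℝ := ∑ j ∈ Finset.Icc 1 k, (1 - x ^ ((2 * k + 1) * (k + j))) with hS1def
  set S2 : ℝ := ∑ i ∈ Finset.Icc 1 k, ∑ j ∈ Finset.Icc 1 k, x ^ ((k + i) * (k + j)) with hS2def
  have hX0 : 0 ≤ X := pow_nonneg hx0 _
  have hX1 : X ≤ 1 := pow_le_one₀ hx0 hx1
  have hterm : ∀ j ∈ Finset.Icc 1 k, X ≤ x ^ ((2 * k + 1) * (k + j)) ∧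
      x ^ ((2 * k + 1) * (k + j)) ≤ 1 := by
    intro j hj
    rw [Finset.mem_Icc] at hj
    constructor
    · rw [hXdef, pow_two]
      exact pow_le_pow_of_le_one hx0 hx1 (Nat.mul_le_mul_left _ (by omega))
    · exact pow_le_one₀ hx0 hx1
  have hS1nn : 0 ≤ S1 := Finset.sum_nonneg (fun j hj => by linarith [(hterm j hj).2])
  have hS1le : S1 ≤ k * (1 - X) := by
    calc S1 ≤ ∑ _j ∈ Finset.Icc 1 k, (1 - X) :=
          Finset.sum_le_sum (fun j hj => by linarith [(hterm j hj).1])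
      _ = k * (1 - X) := by
          rw [Finset.sum_const, Nat.card_Icc, nsmul_eq_mul]; norm_num
  have hS2le : S2 ≤ (k:ℝ) ^ 2 := by
    calc S2 ≤ ∑ _i ∈ Finset.Icc 1 k, ∑ _j ∈ Finset.Icc 1 k, (1:ℝ) :=
          Finset.sum_le_sum (fun i _ => Finset.sum_le_sum
            (fun j _ => pow_le_one₀ hx0 hx1))
      _ = (k:ℝ) ^ 2 := by
          simp [Finset.sum_const, Nat.card_Icc]; ring
  have hS2ge : (k:ℝ) ^ 2 * X ≤ S2 := by
    have h : ∀ i ∈ Finset.Icc 1 k, ∀ j ∈ Finset.Icc 1 k,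
        X ≤ x ^ ((k + i) * (k + j)) := by
      intro i hi j hj
      rw [Finset.mem_Icc] at hi hj
      rw [hXdef, pow_two]
      exact pow_le_pow_of_le_one hx0 hx1
        (Nat.mul_le_mul (by omega) (by omega))
    calc (k:ℝ) ^ 2 * X = ∑ _i ∈ Finset.Icc 1 k, ∑ _j ∈ Finset.Icc 1 k, X := by
          simp [Finset.sum_const, Nat.card_Icc]; ring
      _ ≤ S2 := Finset.sum_le_sum (fun i hi => Finset.sum_le_sum (h i hi))
  have hC : 0 ≤ 1 / (m:ℝ) + 1 / n - 4 * k / (m * n) := by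
    have h1 : 4 * (k:ℝ) / (m * n) ≤ 1 / n := by
      rw [div_le_div_iff₀ (by positivity) hn0]
      nlinarith
    have h2 : 0 < 1 / (m:ℝ) := by positivity
    linarith
  have hcast : ((m - 2 * k : ℕ) : ℝ) = (m:ℝ) - 2 * k := by
    have h : 2 * k ≤ m := by omega
    push_cast [h]; ring
  have hcast' : ((n - 2 * k : ℕ) : ℝ) = (n:ℝ) - 2 * k := by
    have h : 2 * k ≤ n := by omega
    push_cast [h]; ring
  rw [hp₁ γ, hp₂ γ, hp γ, ← hxdef, ← hXdef, ← hS1def, ← hS2def, hcast, hcast']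
  constructor
  · have heq : ((m:ℝ) - 2 * k) * ((n:ℝ) - 2 * k) * (1 - X) / (m * n) =
        (1 - 2 * k / (m:ℝ)) * (1 - 2 * k / n) * (1 - X) := by
      field_simp
      try ring

    rw [heq]
    have t2 : 0 ≤ 4 / ((m:ℝ) * n) * ((k:ℝ) ^ 2 - S2) := by
      apply mul_nonneg (by positivity)
      linarith
    have t3 : 0 ≤ 2 * (1 / (m:ℝ) + 1 / n - 4 * k / (m * n)) * S1 := by
      apply mul_nonneg (by linarith)
      exact hS1nn
    linarith
  · have hid : (1 - X) -
        ((1 - 2 * k / (m:ℝ)) * (1 - 2 * k / n) * (1 - X)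
          + 4 / ((m:ℝ) * n) * ((k:ℝ) ^ 2 - S2)
          + 2 * (1 / (m:ℝ) + 1 / n - 4 * k / (m * n)) * S1) =
        4 / ((m:ℝ) * n) * (S2 - (k:ℝ) ^ 2 * X)
          + 2 * (1 / (m:ℝ) + 1 / n - 4 * k / (m * n)) * ((k:ℝ) * (1 - X) - S1) := by
      field_simp
      try ring

    have b1 : 0 ≤ 4 / ((m:ℝ) * n) * (S2 - (k:ℝ) ^ 2 * X) :=
      mul_nonneg (by positivity) (by linarith)
    have b2 : 0 ≤ 2 * (1 / (m:ℝ) + 1 / n - 4 * k / (m * n)) *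
        ((k:ℝ) * (1 - X) - S1) :=
      mul_nonneg (by linarith) (by linarith)
    linarith
end
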